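/- Let G be a graph with maximum degree Δ and e = uv an edge. Then |F(e)| ≤ Δ² − 1 − |C_e^Δ|/2 − |T₁(e)| − |T₂(e)|/2 − |T₆(e)|/2. Moreover, if equality holds then every vertex in N(u) ∪ N(v) has degree Δ. -/

import Mathlib

open SimpleGraph

variable {V : Type*}

/-- The set of endvertices of edges in `M`. -/
def edgeVerts (M : Set (Sym2 V)) : Set V := {v | ∃ e ∈ M, v ∈ e}

/-- `M` is a semistrong matching of `G`: `M ⊆ E(G)` and each edge of `M` is incident with a
vertex of degree 1 in the subgraph of `G` induced by the endvertices of edges of `M`. -/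
def IsSemistrongMatching (G : SimpleGraph V) (M : Set (Sym2 V)) : Prop :=
  M ⊆ G.edgeSet ∧ ∀ e ∈ M, ∃ v ∈ e, ∃! u, u ∈ edgeVerts M ∧ G.Adj v u

/-- `M` is an induced (strong) matching of `G`: every vertex of the subgraph induced by the
endvertices of `M` has degree 1 in that subgraph. -/
def IsInducedMatching (G : SimpleGraph V) (M : Set (Sym2 V)) : Prop :=
  M ⊆ G.edgeSet ∧ ∀ v ∈ edgeVerts M, ∃! u, u ∈ edgeVerts M ∧ G.Adj v u

/-- Two edges are at distance 1 (adjacent): distinct and sharing a vertex. -/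
def EdgeAdj (e f : Sym2 V) : Prop := e ≠ f ∧ ∃ v, v ∈ e ∧ v ∈ f

/-- Two edges are at distance 2: distinct, nonadjacent, both adjacent to a common edge of `G`. -/
def EdgeDist2 (G : SimpleGraph V) (e f : Sym2 V) : Prop :=
  e ≠ f ∧ ¬ EdgeAdj e f ∧ ∃ g ∈ G.edgeSet, EdgeAdj e g ∧ EdgeAdj f g

/-- A semistrong edge coloring: each color class is a semistrong matching. -/
def IsSemistrongColoring (G : SimpleGraph V) {k : ℕ} (c : Sym2 V → Fin k) : Prop :=
  ∀ i, IsSemistrongMatching G {e | e ∈ G.edgeSet ∧ c e = i}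

/-- A strong edge coloring: each color class is an induced matching. -/
def IsStrongColoring (G : SimpleGraph V) {k : ℕ} (c : Sym2 V → Fin k) : Prop :=
  ∀ i, IsInducedMatching G {e | e ∈ G.edgeSet ∧ c e = i}

/-- A (0,1)-relaxed strong edge coloring: no edge has a same-colored adjacent edge,
and each edge has at most one same-colored edge at distance 2. -/
def IsRelaxedColoring (G : SimpleGraph V) {k : ℕ} (c : Sym2 V → Fin k) : Prop :=
  (∀ e ∈ G.edgeSet, ∀ f ∈ G.edgeSet, EdgeAdj e f → c e ≠ c f) ∧
  (∀ e ∈ G.edgeSet, {f | f ∈ G.edgeSet ∧ EdgeDist2 G e f ∧ c f = c e}.Subsingleton)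

/-- The semistrong chromatic index. -/
noncomputable def ssIndex (G : SimpleGraph V) : ℕ :=
  sInf {k | ∃ c : Sym2 V → Fin k, IsSemistrongColoring G c}

/-- The strong chromatic index. -/
noncomputable def strongIndex (G : SimpleGraph V) : ℕ :=
  sInf {k | ∃ c : Sym2 V → Fin k, IsStrongColoring G c}

/-- The (0,1)-relaxed strong chromatic index. -/
noncomputable def relIndex (G : SimpleGraph V) : ℕ :=
  sInf {k | ∃ c : Sym2 V → Fin k, IsRelaxedColoring G c}

/-- `N(e)`: the set of edges of `G` at distance 1 from `e`. -/
def Nset (G : SimpleGraph V) (e : Sym2 V) : Set (Sym2 V) :=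
  {f | f ∈ G.edgeSet ∧ EdgeAdj e f}

/-- The set of edges of `G` at distance 2 from `e` (the 2-neighbors of `e`). -/
def Dist2Set (G : SimpleGraph V) (e : Sym2 V) : Set (Sym2 V) :=
  {f | f ∈ G.edgeSet ∧ EdgeDist2 G e f}

/-- The adjacent pairs of vertices `(x, y)` with `x` an endvertex of `e` and `y` an endvertex
of `f` ("cross edges" between `e` and `f`, with multiplicity of orientation from `e` to `f`). -/
def crossPairs (G : SimpleGraph V) (e f : Sym2 V) : Set (V × V) :=
  {p | p.1 ∈ e ∧ p.2 ∈ f ∧ G.Adj p.1 p.2}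

/-- Type 1 two-neighbors of `e`: all four cross edges present
(the induced subgraph on the four endvertices is `K₄`). -/
def T1 (G : SimpleGraph V) (e : Sym2 V) : Set (Sym2 V) :=
  {f | f ∈ Dist2Set G e ∧ (crossPairs G e f).ncard = 4}

/-- Type 2 two-neighbors of `e`: exactly three cross edges present. -/
def T2 (G : SimpleGraph V) (e : Sym2 V) : Set (Sym2 V) :=
  {f | f ∈ Dist2Set G e ∧ (crossPairs G e f).ncard = 3}

/-- Type 3 two-neighbors of `e`: exactly two cross edges, both ending at the same endvertex
of `f` (so the endvertices of `e` have a common neighbor and `e` lies on a triangle of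
the induced subgraph). -/
def T3 (G : SimpleGraph V) (e : Sym2 V) : Set (Sym2 V) :=
  {f | f ∈ Dist2Set G e ∧ (crossPairs G e f).ncard = 2 ∧
    ∃ y ∈ f, ∀ p ∈ crossPairs G e f, p.2 = y}

/-- Type 5 two-neighbors of `e`: exactly two cross edges, both starting at the same endvertex
of `e` (so `f` lies on a triangle of the induced subgraph). -/
def T5 (G : SimpleGraph V) (e : Sym2 V) : Set (Sym2 V) :=
  {f | f ∈ Dist2Set G e ∧ (crossPairs G e f).ncard = 2 ∧
    ∃ x ∈ e, ∀ p ∈ crossPairs G e f, p.1 = x}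

/-- Type 4 two-neighbors of `e`: exactly two cross edges forming a matching
(the induced subgraph on the four endvertices is a 4-cycle). -/
def T4 (G : SimpleGraph V) (e : Sym2 V) : Set (Sym2 V) :=
  {f | f ∈ Dist2Set G e ∧ (crossPairs G e f).ncard = 2 ∧
    (¬ ∃ y ∈ f, ∀ p ∈ crossPairs G e f, p.2 = y) ∧
    (¬ ∃ x ∈ e, ∀ p ∈ crossPairs G e f, p.1 = x)}

/-- Type 6 two-neighbors of `e`: exactly one cross edge (the induced subgraph on the four
endvertices has exactly 3 edges). -/
def T6 (G : SimpleGraph V) (e : Sym2 V) : Set (Sym2 V) :=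
  {f | f ∈ Dist2Set G e ∧ (crossPairs G e f).ncard = 1}

/-- `F(e) = N(e) ∪ T₁(e) ∪ T₂(e) ∪ T₃(e) ∪ T₄(e) ∪ T₅(e)`: the edges at distance 1 from `e`
together with the 2-neighbors with at least two cross edges. -/
def Fset (G : SimpleGraph V) (e : Sym2 V) : Set (Sym2 V) :=
  Nset G e ∪ {f | f ∈ Dist2Set G e ∧ 2 ≤ (crossPairs G e f).ncard}

/-- `C_e^Δ`: the set of edges adjacent to `e` lying on a common triangle with `e`. -/
def CDelta (G : SimpleGraph V) (e : Sym2 V) : Set (Sym2 V) :=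
  {f | ∃ w a b, G.Adj w a ∧ G.Adj w b ∧ G.Adj a b ∧ e = s(w, a) ∧ f = s(w, b)}

/-- Two edges lie on a common 4-cycle of `G`. -/
def OnCommonC4 (G : SimpleGraph V) (e f : Sym2 V) : Prop :=
  ∃ a b c d : V, G.Adj a b ∧ G.Adj b c ∧ G.Adj c d ∧ G.Adj d a ∧ a ≠ c ∧ b ≠ d ∧
    e ∈ ({s(a, b), s(b, c), s(c, d), s(d, a)} : Set (Sym2 V)) ∧
    f ∈ ({s(a, b), s(b, c), s(c, d), s(d, a)} : Set (Sym2 V))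
section AuxSSC

variable {V : Type*}

open SimpleGraph in
lemma ssc_dist2_facts (G : SimpleGraph V) {u v : V} {f : Sym2 V}
    (hf : f ∈ Dist2Set G s(u, v)) :
    f ∈ G.edgeSet ∧ ∀ x ∈ f, x ≠ u ∧ x ≠ v := by
  obtain ⟨hE, hne, hnadj, -⟩ := hf
  refine ⟨hE, fun x hx => ⟨?_, ?_⟩⟩ <;> rintro rfl <;>
    exact hnadj ⟨hne, x, by simp [Sym2.mem_iff], hx⟩

open SimpleGraph in
lemma ssc_cross_nonempty (G : SimpleGraph V) {u v : V} {f : Sym2 V}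
    (hf : f ∈ Dist2Set G s(u, v)) :
    (crossPairs G s(u, v) f).Nonempty := by
  obtain ⟨-, hd⟩ := ssc_dist2_facts G hf
  obtain ⟨hfE, hne, hnadj, g, hgE, ⟨-, p, hpe, hpg⟩, ⟨-, q, hqf, hqg⟩⟩ := hf
  have hpq : p ≠ q := by
    rintro rfl
    rw [Sym2.mem_iff] at hpe
    rcases hpe with rfl | rfl
    · exact (hd _ hqf).1 rfl
    · exact (hd _ hqf).2 rfl
  revert hgE hpg hqg
  induction g using Sym2.ind with
  | _ a b =>
    intro hgE hpg hqg
    rw [Sym2.mem_iff] at hpg hqg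
    rw [SimpleGraph.mem_edgeSet] at hgE
    rcases hpg with rfl | rfl <;> rcases hqg with rfl | rfl
    · exact absurd rfl hpq
    · exact ⟨(p, q), hpe, hqf, hgE⟩
    · exact ⟨(p, q), hpe, hqf, hgE.symm⟩
    · exact absurd rfl hpq

lemma ssc_cross_card_le (G : SimpleGraph V) (u v : V) (f : Sym2 V) :
    (crossPairs G s(u, v) f).ncard ≤ 4 := by
  induction f using Sym2.ind with
  | _ c d =>
    have hsub : crossPairs G s(u, v) s(c, d) ⊆
        ({(u, c), (u, d), (v, c), (v, d)} : Set (V × V)) := by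
      rintro ⟨x, y⟩ ⟨hx, hy, -⟩
      rw [Sym2.mem_iff] at hx hy
      rcases hx with rfl | rfl <;> rcases hy with rfl | rfl <;> simp
    have h0 := Set.ncard_le_ncard hsub (Set.toFinite _)
    have h1 := Set.ncard_insert_le (u, c) ({(u, d), (v, c), (v, d)} : Set (V × V))
    have h2 := Set.ncard_insert_le (u, d) ({(v, c), (v, d)} : Set (V × V))
    have h3 := Set.ncard_insert_le (v, c) ({(v, d)} : Set (V × V))
    have h4 : ({(v, d)} : Set (V × V)).ncard = 1 := Set.ncard_singleton _
    omega

end AuxSSC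
open SimpleGraph in
lemma ssc_ncard_neighborSet {V : Type*} [Fintype V] (G : SimpleGraph V) [DecidableRel G.Adj]
    (u : V) : (G.neighborSet u).ncard = G.degree u := by
  rw [← Nat.card_coe_set_eq, Nat.card_eq_fintype_card, G.card_neighborSet_eq_degree]

open SimpleGraph in
lemma ssc_nset_ncard_le {V : Type*} [Fintype V] [DecidableEq V] (G : SimpleGraph V)
    [DecidableRel G.Adj] {u v : V} (huv : G.Adj u v) :
    (Nset G s(u, v)).ncard ≤ (G.degree u - 1) + (G.degree v - 1) := by
  have hsub : Nset G s(u, v) ⊆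
      (fun z => s(u, z)) '' (G.neighborSet u \ {v}) ∪
        (fun z => s(v, z)) '' (G.neighborSet v \ {u}) := by
    intro f hf
    obtain ⟨hfE, hne, x, hxe, hxf⟩ := hf
    rw [Sym2.mem_iff] at hxe
    revert hfE hxf hne
    induction f using Sym2.ind with
    | _ c d =>
      intro hfE hne hxf
      rw [Sym2.mem_iff] at hxf
      rw [SimpleGraph.mem_edgeSet] at hfE
      rcases hxe with rfl | rfl
      · rcases hxf with rfl | rfl
        · refine Or.inl ⟨d, ⟨hfE, ?_⟩, rfl⟩
          rintro rfl
          exact hne rfl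
        · refine Or.inl ⟨c, ⟨hfE.symm, ?_⟩, Sym2.eq_swap⟩
          rintro rfl
          exact hne Sym2.eq_swap
      · rcases hxf with rfl | rfl
        · refine Or.inr ⟨d, ⟨hfE, ?_⟩, rfl⟩
          rintro rfl
          exact hne Sym2.eq_swap
        · refine Or.inr ⟨c, ⟨hfE.symm, ?_⟩, Sym2.eq_swap⟩
          rintro rfl
          exact hne rfl
  calc (Nset G s(u, v)).ncard ≤ _ := Set.ncard_le_ncard hsub (Set.toFinite _)
    _ ≤ _ + _ := Set.ncard_union_le _ _
    _ ≤ (G.degree u - 1) + (G.degree v - 1) := by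
        gcongr
        · calc _ ≤ (G.neighborSet u \ {v}).ncard := Set.ncard_image_le (Set.toFinite _)
            _ = _ := by
              rw [Set.ncard_diff_singleton_of_mem ((G.mem_neighborSet u v).2 huv),
                ssc_ncard_neighborSet]
        · calc _ ≤ (G.neighborSet v \ {u}).ncard := Set.ncard_image_le (Set.toFinite _)
            _ = _ := by
              rw [Set.ncard_diff_singleton_of_mem ((G.mem_neighborSet v u).2 huv.symm),
                ssc_ncard_neighborSet]
open SimpleGraph in
lemma ssc_wside {V : Type*} [Fintype V] [DecidableEq V] (G : SimpleGraph V)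
    [DecidableRel G.Adj] {u v : V} (huv : G.Adj u v) {D : ℕ} (hD : 0 < D)
    (hdeg : ∀ w, G.degree w ≤ D + 1)
    (hsum : D * D ≤ ∑ w ∈ (G.neighborFinset u).erase v, (G.degree w - 1)) :
    (∀ w ∈ (G.neighborFinset u).erase v, G.degree w = D + 1) ∧ G.degree u = D + 1 := by
  have hcard : ((G.neighborFinset u).erase v).card = G.degree u - 1 := by
    rw [Finset.card_erase_of_mem (by simpa using huv)]
    rfl
  have hcard_le : ((G.neighborFinset u).erase v).card ≤ D := by
    have := hdeg u; omega
  have hterm : ∀ w ∈ (G.neighborFinset u).erase v, G.degree w - 1 ≤ D := by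
    intro w _; have := hdeg w; omega
  have hle : ∑ w ∈ (G.neighborFinset u).erase v, (G.degree w - 1) ≤
      ((G.neighborFinset u).erase v).card * D := by
    calc _ ≤ ∑ _w ∈ (G.neighborFinset u).erase v, D := Finset.sum_le_sum hterm
      _ = _ := by rw [Finset.sum_const, smul_eq_mul]
  constructor
  · intro w hw
    by_contra hne
    have hwlt : G.degree w - 1 < D := by
      have h1 := hdeg w
      have h2 : 0 < G.degree w := by
        rw [G.degree_pos_iff_exists_adj]
        rw [Finset.mem_erase, SimpleGraph.mem_neighborFinset] at hw
        exact ⟨u, (hw.2).symm⟩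
      omega
    have hlt : ∑ w ∈ (G.neighborFinset u).erase v, (G.degree w - 1) <
        ∑ _w ∈ (G.neighborFinset u).erase v, D :=
      Finset.sum_lt_sum hterm ⟨w, hw, hwlt⟩
    rw [Finset.sum_const, smul_eq_mul] at hlt
    have : ((G.neighborFinset u).erase v).card * D ≤ D * D :=
      Nat.mul_le_mul_right _ hcard_le
    omega
  · have h1 : D * D ≤ (G.degree u - 1) * D := by
      rw [← hcard]; exact hsum.trans hle
    have h2 : D ≤ G.degree u - 1 := Nat.le_of_mul_le_mul_right h1 hD
    have := hdeg u
    omega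

/-- For any edge `e = uv` of a graph with maximum degree `Δ`,
`|F(e)| ≤ Δ² − 1 − |C_e^Δ|/2 − |T₁(e)| − |T₂(e)|/2 − |T₆(e)|/2` (stated multiplied by 2 to
avoid fractions); moreover if equality holds then every vertex in `N(u) ∪ N(v)` has degree `Δ`. -/
theorem Fset_card_bound [Fintype V] [DecidableEq V] (G : SimpleGraph V) [DecidableRel G.Adj]
    (Δ : ℕ) (hΔ : G.maxDegree = Δ) (u v : V) (huv : G.Adj u v) :
    2 * (Fset G s(u, v)).ncard + (CDelta G s(u, v)).ncard + 2 * (T1 G s(u, v)).ncard +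
        (T2 G s(u, v)).ncard + (T6 G s(u, v)).ncard ≤ 2 * (Δ ^ 2 - 1) ∧
      (2 * (Fset G s(u, v)).ncard + (CDelta G s(u, v)).ncard + 2 * (T1 G s(u, v)).ncard +
          (T2 G s(u, v)).ncard + (T6 G s(u, v)).ncard = 2 * (Δ ^ 2 - 1) →
        ∀ w, w ∈ G.neighborSet u ∪ G.neighborSet v → G.degree w = Δ) := by
  classical
  have hdu1 : 0 < G.degree u := by rw [G.degree_pos_iff_exists_adj]; exact ⟨v, huv⟩
  have hdv1 : 0 < G.degree v := by rw [G.degree_pos_iff_exists_adj]; exact ⟨u, huv.symm⟩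
  have hΔ1 : 1 ≤ Δ := by have := G.degree_le_maxDegree u; omega
  obtain ⟨D, rfl⟩ : ∃ D, Δ = D + 1 := ⟨Δ - 1, by omega⟩
  have hdeg : ∀ w, G.degree w ≤ D + 1 := fun w => hΔ ▸ G.degree_le_maxDegree w
  have hne_uv : u ≠ v := G.ne_of_adj huv
  -- walk sets
  set NUu := (G.neighborFinset u).erase v with hNUu_def
  set NVv := (G.neighborFinset v).erase u with hNVv_def
  set Wu : Finset (V × V) := NUu.biUnion
      (fun w => ({w} : Finset V) ×ˢ ((G.neighborFinset w).erase u)) with hWu_def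
  set Wv : Finset (V × V) := NVv.biUnion
      (fun w => ({w} : Finset V) ×ˢ ((G.neighborFinset w).erase v)) with hWv_def
  set W : Finset (V × V × V) := ({u} ×ˢ Wu) ∪ ({v} ×ˢ Wv) with hW_def
  have hmemWu : ∀ w z : V, (w, z) ∈ Wu ↔ (G.Adj u w ∧ w ≠ v ∧ G.Adj w z ∧ z ≠ u) := by
    intro w z
    constructor
    · intro h
      rw [hWu_def, Finset.mem_biUnion] at h
      obtain ⟨w', hw', hm⟩ := h
      rw [Finset.mem_product, Finset.mem_singleton] at hm
      obtain ⟨rfl, hz⟩ := hm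
      rw [hNUu_def, Finset.mem_erase, SimpleGraph.mem_neighborFinset] at hw'
      rw [Finset.mem_erase, SimpleGraph.mem_neighborFinset] at hz
      exact ⟨hw'.2, hw'.1, hz.2, hz.1⟩
    · rintro ⟨h1, h2, h3, h4⟩
      rw [hWu_def, Finset.mem_biUnion]
      refine ⟨w, ?_, ?_⟩
      · rw [hNUu_def, Finset.mem_erase, SimpleGraph.mem_neighborFinset]; exact ⟨h2, h1⟩
      · rw [Finset.mem_product, Finset.mem_singleton]
        exact ⟨rfl, by rw [Finset.mem_erase, SimpleGraph.mem_neighborFinset]; exact ⟨h4, h3⟩⟩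
  have hmemWv : ∀ w z : V, (w, z) ∈ Wv ↔ (G.Adj v w ∧ w ≠ u ∧ G.Adj w z ∧ z ≠ v) := by
    intro w z
    constructor
    · intro h
      rw [hWv_def, Finset.mem_biUnion] at h
      obtain ⟨w', hw', hm⟩ := h
      rw [Finset.mem_product, Finset.mem_singleton] at hm
      obtain ⟨rfl, hz⟩ := hm
      rw [hNVv_def, Finset.mem_erase, SimpleGraph.mem_neighborFinset] at hw'
      rw [Finset.mem_erase, SimpleGraph.mem_neighborFinset] at hz
      exact ⟨hw'.2, hw'.1, hz.2, hz.1⟩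
    · rintro ⟨h1, h2, h3, h4⟩
      rw [hWv_def, Finset.mem_biUnion]
      refine ⟨w, ?_, ?_⟩
      · rw [hNVv_def, Finset.mem_erase, SimpleGraph.mem_neighborFinset]; exact ⟨h2, h1⟩
      · rw [Finset.mem_product, Finset.mem_singleton]
        exact ⟨rfl, by rw [Finset.mem_erase, SimpleGraph.mem_neighborFinset]; exact ⟨h4, h3⟩⟩
  have hmemW : ∀ x w z : V, (x, w, z) ∈ W ↔
      ((x = u ∧ G.Adj u w ∧ w ≠ v ∧ G.Adj w z ∧ z ≠ u) ∨
       (x = v ∧ G.Adj v w ∧ w ≠ u ∧ G.Adj w z ∧ z ≠ v)) := by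
    intro x w z
    rw [hW_def, Finset.mem_union, Finset.mem_product, Finset.mem_product,
      Finset.mem_singleton, Finset.mem_singleton]
    constructor
    · rintro (⟨rfl, h⟩ | ⟨rfl, h⟩)
      · exact Or.inl ⟨rfl, (hmemWu w z).1 h⟩
      · exact Or.inr ⟨rfl, (hmemWv w z).1 h⟩
    · rintro (⟨rfl, h⟩ | ⟨rfl, h⟩)
      · exact Or.inl ⟨rfl, (hmemWu w z).2 h⟩
      · exact Or.inr ⟨rfl, (hmemWv w z).2 h⟩
  -- cardinalities of the walk sets
  have hWu_card : Wu.card = ∑ w ∈ NUu, (G.degree w - 1) := by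
    rw [hWu_def, Finset.card_biUnion]
    · refine Finset.sum_congr rfl fun w hw => ?_
      rw [hNUu_def, Finset.mem_erase, SimpleGraph.mem_neighborFinset] at hw
      rw [Finset.card_product, Finset.card_singleton, one_mul,
        Finset.card_erase_of_mem (by rw [SimpleGraph.mem_neighborFinset]; exact hw.2.symm)]
      rfl
    · intro a _ b _ hab
      rw [Function.onFun, Finset.disjoint_left]
      intro p hpa hpb
      rw [Finset.mem_product, Finset.mem_singleton] at hpa hpb
      exact hab (hpa.1.symm.trans hpb.1)
  have hWv_card : Wv.card = ∑ w ∈ NVv, (G.degree w - 1) := by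
    rw [hWv_def, Finset.card_biUnion]
    · refine Finset.sum_congr rfl fun w hw => ?_
      rw [hNVv_def, Finset.mem_erase, SimpleGraph.mem_neighborFinset] at hw
      rw [Finset.card_product, Finset.card_singleton, one_mul,
        Finset.card_erase_of_mem (by rw [SimpleGraph.mem_neighborFinset]; exact hw.2.symm)]
      rfl
    · intro a _ b _ hab
      rw [Function.onFun, Finset.disjoint_left]
      intro p hpa hpb
      rw [Finset.mem_product, Finset.mem_singleton] at hpa hpb
      exact hab (hpa.1.symm.trans hpb.1)
  have hNUu_card : NUu.card = G.degree u - 1 := by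
    rw [hNUu_def, Finset.card_erase_of_mem (by simpa using huv)]; rfl
  have hNVv_card : NVv.card = G.degree v - 1 := by
    rw [hNVv_def, Finset.card_erase_of_mem (by simpa using huv.symm)]; rfl
  have hWu_le : Wu.card ≤ D * D := by
    rw [hWu_card]
    calc ∑ w ∈ NUu, (G.degree w - 1) ≤ ∑ _w ∈ NUu, D :=
        Finset.sum_le_sum fun w _ => by have := hdeg w; omega
      _ = NUu.card * D := by rw [Finset.sum_const, smul_eq_mul]
      _ ≤ D * D := Nat.mul_le_mul_right _ (by have := hdeg u; omega)
  have hWv_le : Wv.card ≤ D * D := by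
    rw [hWv_card]
    calc ∑ w ∈ NVv, (G.degree w - 1) ≤ ∑ _w ∈ NVv, D :=
        Finset.sum_le_sum fun w _ => by have := hdeg w; omega
      _ = NVv.card * D := by rw [Finset.sum_const, smul_eq_mul]
      _ ≤ D * D := Nat.mul_le_mul_right _ (by have := hdeg v; omega)
  have hW_card : W.card = Wu.card + Wv.card := by
    have hdisj : Disjoint (({u} : Finset V) ×ˢ Wu) (({v} : Finset V) ×ˢ Wv) := by
      rw [Finset.disjoint_left]
      intro p hp1 hp2
      rw [Finset.mem_product, Finset.mem_singleton] at hp1 hp2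
      exact hne_uv (hp1.1.symm.trans hp2.1)
    rw [hW_def, Finset.card_union_of_disjoint hdisj, Finset.card_product,
      Finset.card_product]
    simp
  -- the finsets of CDelta and Dist2Set
  set Cfin := (Set.toFinite (CDelta G s(u, v))).toFinset with hCfin_def
  set D2fin := (Set.toFinite (Dist2Set G s(u, v))).toFinset with hD2fin_def
  have hmemC : ∀ f, f ∈ Cfin ↔ f ∈ CDelta G s(u, v) := fun f => Set.Finite.mem_toFinset _
  have hmemD2 : ∀ f, f ∈ D2fin ↔ f ∈ Dist2Set G s(u, v) := fun f => Set.Finite.mem_toFinset _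
  -- fibers of the map (x, w, z) ↦ s(w, z)
  have hCfiber : ∀ f ∈ Cfin, 1 ≤ (W.filter (fun p => s(p.2.1, p.2.2) = f)).card := by
    intro f hf
    rw [hmemC] at hf
    obtain ⟨w, a, b, hwa, hwb, hab, hew, hfw⟩ := hf
    rw [Sym2.eq_iff] at hew
    rcases hew with ⟨rfl, rfl⟩ | ⟨rfl, rfl⟩
    · refine Finset.card_pos.2 ⟨(v, b, u), Finset.mem_filter.2 ⟨?_, ?_⟩⟩
      · rw [hmemW]
        exact Or.inr ⟨rfl, hab, (G.ne_of_adj hwb).symm, hwb.symm, hne_uv⟩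
      · show s(b, u) = f
        rw [hfw]; exact Sym2.eq_swap
    · refine Finset.card_pos.2 ⟨(u, b, v), Finset.mem_filter.2 ⟨?_, ?_⟩⟩
      · rw [hmemW]
        exact Or.inl ⟨rfl, hab, (G.ne_of_adj hwb).symm, hwb.symm, hne_uv.symm⟩
      · show s(b, v) = f
        rw [hfw]; exact Sym2.eq_swap
  have hD2fiber : ∀ f ∈ D2fin,
      (W.filter (fun p => s(p.2.1, p.2.2) = f)).card = (crossPairs G s(u, v) f).ncard := by
    intro f hf
    rw [hmemD2] at hf
    obtain ⟨hfE, hdisjf⟩ := ssc_dist2_facts G hf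
    rw [Set.ncard_eq_toFinset_card _ (Set.toFinite _)]
    refine Finset.card_bij (fun p _ => (p.1, p.2.1)) ?_ ?_ ?_
    · rintro ⟨x, w, z⟩ hp
      rw [Finset.mem_filter] at hp
      obtain ⟨hpW, hpf⟩ := hp
      have hpf' : s(w, z) = f := hpf
      rw [hmemW] at hpW
      rw [Set.Finite.mem_toFinset]
      have hwf : w ∈ f := by rw [← hpf']; exact Sym2.mem_mk_left _ _
      rcases hpW with ⟨rfl, h1, h2, h3, h4⟩ | ⟨rfl, h1, h2, h3, h4⟩
      · exact ⟨by rw [Sym2.mem_iff]; left; rfl, hwf, h1⟩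
      · exact ⟨by rw [Sym2.mem_iff]; right; rfl, hwf, h1⟩
    · rintro ⟨x, w, z⟩ hp ⟨x', w', z'⟩ hp' heq
      rw [Finset.mem_filter] at hp hp'
      have hpf : s(w, z) = f := hp.2
      have hpf' : s(w', z') = f := hp'.2
      rw [Prod.mk.injEq] at heq
      obtain ⟨rfl, rfl⟩ := heq
      have hzz : s(w, z) = s(w, z') := hpf.trans hpf'.symm
      rw [Sym2.eq_iff] at hzz
      rcases hzz with ⟨-, rfl⟩ | ⟨h1, h2⟩
      · rfl
      · rw [Prod.mk.injEq, Prod.mk.injEq]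
        exact ⟨rfl, rfl, h2.trans h1⟩
    · rintro ⟨x, y⟩ hb
      rw [Set.Finite.mem_toFinset] at hb
      obtain ⟨hx, hy, hadj⟩ := hb
      obtain ⟨z, rfl⟩ : ∃ z, f = s(y, z) := Sym2.mem_iff_exists.1 hy
      rw [SimpleGraph.mem_edgeSet] at hfE
      have hzf : z ∈ s(y, z) := Sym2.mem_mk_right _ _
      have hyf : y ∈ s(y, z) := Sym2.mem_mk_left _ _
      rw [Sym2.mem_iff] at hx
      rcases hx with rfl | rfl
      · refine ⟨(x, y, z), Finset.mem_filter.2 ⟨?_, rfl⟩, rfl⟩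
        rw [hmemW]
        exact Or.inl ⟨rfl, hadj, (hdisjf y hyf).2, hfE, (hdisjf z hzf).1⟩
      · refine ⟨(x, y, z), Finset.mem_filter.2 ⟨?_, rfl⟩, rfl⟩
        rw [hmemW]
        exact Or.inr ⟨rfl, hadj, (hdisjf y hyf).1, hfE, (hdisjf z hzf).2⟩
  have hfiber_pos : ∀ f ∈ Cfin ∪ D2fin,
      1 ≤ (W.filter (fun p => s(p.2.1, p.2.2) = f)).card := by
    intro f hf
    rcases Finset.mem_union.1 hf with h | h
    · exact hCfiber f h
    · rw [hD2fiber f h]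
      exact (Set.ncard_pos (Set.toFinite _)).2 (ssc_cross_nonempty G ((hmemD2 f).1 h))
  have himg : Cfin ∪ D2fin ⊆ W.image (fun p => s(p.2.1, p.2.2)) := by
    intro f hf
    obtain ⟨p, hp⟩ := Finset.card_pos.1 (hfiber_pos f hf)
    rw [Finset.mem_filter] at hp
    exact Finset.mem_image.2 ⟨p, hp.1, hp.2⟩
  have hCD_disj : Disjoint Cfin D2fin := by
    rw [Finset.disjoint_left]
    intro f hfC hfD
    rw [hmemC] at hfC
    rw [hmemD2] at hfD
    obtain ⟨w, a, b, hwa, hwb, hab, hew, hfw⟩ := hfC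
    refine hfD.2.2.1 ⟨hfD.2.1, w, ?_, ?_⟩
    · rw [hew]; exact Sym2.mem_mk_left _ _
    · rw [hfw]; exact Sym2.mem_mk_left _ _
  have hkey : Cfin.card + ∑ f ∈ D2fin, (crossPairs G s(u, v) f).ncard ≤ W.card := by
    have h1 : W.card = ∑ b ∈ W.image (fun p => s(p.2.1, p.2.2)),
        (W.filter (fun p => s(p.2.1, p.2.2) = b)).card :=
      Finset.card_eq_sum_card_fiberwise fun x hx => Finset.mem_image_of_mem _ hx
    have h2 : ∑ f ∈ Cfin ∪ D2fin, (W.filter (fun p => s(p.2.1, p.2.2) = f)).card ≤ W.card := by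
      rw [h1]; exact Finset.sum_le_sum_of_subset himg
    rw [Finset.sum_union hCD_disj] at h2
    refine le_trans (add_le_add ?_ ?_) h2
    · calc Cfin.card = ∑ _f ∈ Cfin, 1 := by rw [Finset.sum_const, smul_eq_mul, mul_one]
        _ ≤ _ := Finset.sum_le_sum hCfiber
    · exact le_of_eq (Finset.sum_congr rfl fun f hf => (hD2fiber f hf).symm)
  have hval : ∀ f ∈ D2fin, (crossPairs G s(u, v) f).ncard = 1 ∨
      (crossPairs G s(u, v) f).ncard = 2 ∨ (crossPairs G s(u, v) f).ncard = 3 ∨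
      (crossPairs G s(u, v) f).ncard = 4 := by
    intro f hf
    have h1 : 0 < (crossPairs G s(u, v) f).ncard :=
      (Set.ncard_pos (Set.toFinite _)).2 (ssc_cross_nonempty G ((hmemD2 f).1 hf))
    have h4 := ssc_cross_card_le G u v f
    omega
  set c1 := (D2fin.filter (fun f => (crossPairs G s(u, v) f).ncard = 1)).card with hc1_def
  set c2 := (D2fin.filter (fun f => (crossPairs G s(u, v) f).ncard = 2)).card with hc2_def
  set c3 := (D2fin.filter (fun f => (crossPairs G s(u, v) f).ncard = 3)).card with hc3_def
  set c4 := (D2fin.filter (fun f => (crossPairs G s(u, v) f).ncard = 4)).card with hc4_def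
  have hsum_cp : ∑ f ∈ D2fin, (crossPairs G s(u, v) f).ncard
      = c1 + 2 * c2 + 3 * c3 + 4 * c4 := by
    have hsplit : ∑ f ∈ D2fin, (crossPairs G s(u, v) f).ncard
        = ∑ f ∈ D2fin, ((if (crossPairs G s(u, v) f).ncard = 1 then 1 else 0)
          + 2 * (if (crossPairs G s(u, v) f).ncard = 2 then 1 else 0)
          + 3 * (if (crossPairs G s(u, v) f).ncard = 3 then 1 else 0)
          + 4 * (if (crossPairs G s(u, v) f).ncard = 4 then 1 else 0)) :=
      Finset.sum_congr rfl fun f hf => by rcases hval f hf with h | h | h | h <;> rw [h] <;>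
        norm_num
    rw [hsplit, Finset.sum_add_distrib, Finset.sum_add_distrib, Finset.sum_add_distrib,
      ← Finset.mul_sum, ← Finset.mul_sum, ← Finset.mul_sum, ← Finset.card_filter,
      ← Finset.card_filter, ← Finset.card_filter, ← Finset.card_filter]
  have hT6 : (T6 G s(u, v)).ncard = c1 := by
    rw [Set.ncard_eq_toFinset_card _ (Set.toFinite _), hc1_def]
    congr 1
    ext f
    rw [Set.Finite.mem_toFinset, Finset.mem_filter]
    exact ⟨fun ⟨h1, h2⟩ => ⟨(hmemD2 f).2 h1, h2⟩, fun ⟨h1, h2⟩ => ⟨(hmemD2 f).1 h1, h2⟩⟩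
  have hT2 : (T2 G s(u, v)).ncard = c3 := by
    rw [Set.ncard_eq_toFinset_card _ (Set.toFinite _), hc3_def]
    congr 1
    ext f
    rw [Set.Finite.mem_toFinset, Finset.mem_filter]
    exact ⟨fun ⟨h1, h2⟩ => ⟨(hmemD2 f).2 h1, h2⟩, fun ⟨h1, h2⟩ => ⟨(hmemD2 f).1 h1, h2⟩⟩
  have hT1 : (T1 G s(u, v)).ncard = c4 := by
    rw [Set.ncard_eq_toFinset_card _ (Set.toFinite _), hc4_def]
    congr 1
    ext f
    rw [Set.Finite.mem_toFinset, Finset.mem_filter]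
    exact ⟨fun ⟨h1, h2⟩ => ⟨(hmemD2 f).2 h1, h2⟩, fun ⟨h1, h2⟩ => ⟨(hmemD2 f).1 h1, h2⟩⟩
  -- split Fset
  have hge2 : (D2fin.filter (fun f => 2 ≤ (crossPairs G s(u, v) f).ncard)).card
      = c2 + c3 + c4 := by
    rw [hc2_def, hc3_def, hc4_def, Finset.card_filter, Finset.card_filter, Finset.card_filter,
      Finset.card_filter, ← Finset.sum_add_distrib, ← Finset.sum_add_distrib]
    refine Finset.sum_congr rfl fun f hf => ?_
    rcases hval f hf with h | h | h | h <;> rw [h] <;> norm_num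
  have hFsplit : (Fset G s(u, v)).ncard = (Nset G s(u, v)).ncard + (c2 + c3 + c4) := by
    have hFeq : Fset G s(u, v) = Nset G s(u, v) ∪
        {f | f ∈ Dist2Set G s(u, v) ∧ 2 ≤ (crossPairs G s(u, v) f).ncard} := rfl
    have hdisjF : Disjoint (Nset G s(u, v))
        {f | f ∈ Dist2Set G s(u, v) ∧ 2 ≤ (crossPairs G s(u, v) f).ncard} := by
      rw [Set.disjoint_left]
      rintro f ⟨hfE, hadj⟩ ⟨hfD, -⟩
      exact hfD.2.2.1 hadj
    rw [hFeq, Set.ncard_union_eq hdisjF (Set.toFinite _) (Set.toFinite _), ← hge2]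
    congr 1
    rw [Set.ncard_eq_toFinset_card _ (Set.toFinite _)]
    congr 1
    ext f
    rw [Set.Finite.mem_toFinset, Finset.mem_filter]
    exact ⟨fun ⟨h1, h2⟩ => ⟨(hmemD2 f).2 h1, h2⟩, fun ⟨h1, h2⟩ => ⟨(hmemD2 f).1 h1, h2⟩⟩
  have hC_card : (CDelta G s(u, v)).ncard = Cfin.card :=
    Set.ncard_eq_toFinset_card _ _
  have hN_le : (Nset G s(u, v)).ncard ≤ (G.degree u - 1) + (G.degree v - 1) :=
    ssc_nset_ncard_le G huv
  have hdu := hdeg u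
  have hdv := hdeg v
  have hΔsq : (D + 1) ^ 2 - 1 = D * D + 2 * D := by
    have : (D + 1) ^ 2 = D * D + 2 * D + 1 := by ring
    omega
  rw [hsum_cp] at hkey
  set Q := D * D with hQ_def
  constructor
  · rw [hFsplit, hC_card, hT1, hT2, hT6, hΔsq]
    omega
  · intro heq w hw
    rw [hFsplit, hC_card, hT1, hT2, hT6, hΔsq] at heq
    rcases Nat.eq_zero_or_pos D with hD0 | hDpos
    · have hwpos : 0 < G.degree w := by
        rw [G.degree_pos_iff_exists_adj]
        rcases hw with hw | hw
        · exact ⟨u, ((G.mem_neighborSet u w).1 hw).symm⟩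
        · exact ⟨v, ((G.mem_neighborSet v w).1 hw).symm⟩
      have := hdeg w
      omega
    · have hWuQ : Q ≤ Wu.card := by omega
      have hWvQ : Q ≤ Wv.card := by omega
      have hu_side := ssc_wside G huv hDpos hdeg
        (by rw [← hNUu_def, ← hWu_card]; omega)
      have hv_side := ssc_wside G huv.symm hDpos hdeg
        (by rw [← hNVv_def, ← hWv_card]; omega)
      rcases hw with hw | hw
      · rw [SimpleGraph.mem_neighborSet] at hw
        by_cases hwv : w = v
        · subst hwv; exact hv_side.2
        · exact hu_side.1 w (by
            rw [← hNUu_def, hNUu_def, Finset.mem_erase, SimpleGraph.mem_neighborFinset]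
            exact ⟨hwv, hw⟩)
      · rw [SimpleGraph.mem_neighborSet] at hw
        by_cases hwu : w = u
        · subst hwu; exact hu_side.2
        · exact hv_side.1 w (by
            rw [Finset.mem_erase, SimpleGraph.mem_neighborFinset]
            exact ⟨hwu, hw⟩)
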